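/- Let (u,v) be C³ on the closure of Ω and P be C¹ on the closure of Ω, with ∂_x u + ∂_y v = 0 in Ω, u = v = 0 on {x = 0} ∪ {y = 0} ∪ {y = 2}, and on {x = L}: ∂_y u + ∂_x v = 0 and P = 2ε ∂_x u. Then ∫_Ω (−εΔu)(−∂_y v) + ∫_Ω (−εΔv)(∂_x v) + ∫_Ω ( (∂_x P)(−∂_y v) + (∂_y P)(∂_x v) ) = (ε/2) ∫₀² |∂_x v(0,y)|² dy + 2ε ∫₀² |∂_x u(L,y)|² dy. -/

import Mathlib

open MeasureTheory Set Real Function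

noncomputable section

/-- The channel domain `Ω = (0,L) × (0,2)`. -/
def Omg (L : ℝ) : Set (ℝ × ℝ) := Ioo (0:ℝ) L ×ˢ Ioo (0:ℝ) 2

/-- Partial derivative in the first (x) variable of a curried function. -/
def pdx (f : ℝ → ℝ → ℝ) : ℝ → ℝ → ℝ := fun x y => deriv (fun s => f s y) x

/-- Partial derivative in the second (y) variable of a curried function. -/
def pdy (f : ℝ → ℝ → ℝ) : ℝ → ℝ → ℝ := fun x y => deriv (fun t => f x t) y

/-- Laplacian `Δ = ∂ₓₓ + ∂_{yy}`. -/
def plap (f : ℝ → ℝ → ℝ) : ℝ → ℝ → ℝ := fun x y => pdx (pdx f) x y + pdy (pdy f) x y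

/-- Integral over `Ω`. -/
def intO (L : ℝ) (F : ℝ → ℝ → ℝ) : ℝ := ∫ p in Omg L, F p.1 p.2

/-- `L²(Ω)` norm. -/
def l2 (L : ℝ) (f : ℝ → ℝ → ℝ) : ℝ := Real.sqrt (intO L fun x y => (f x y)^2)

/-- `L^∞(Ω)` (sup) norm. -/
def supO (L : ℝ) (f : ℝ → ℝ → ℝ) : ℝ := sSup ((fun p : ℝ × ℝ => |f p.1 p.2|) '' Omg L)

/-- `|∇f|²`. -/
def gradSq (f : ℝ → ℝ → ℝ) (x y : ℝ) : ℝ := (pdx f x y)^2 + (pdy f x y)^2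

/-- Energy norm `‖u,v‖_E = ‖√ε ∇u‖_{L²(Ω)} + ‖√ε ∇v‖_{L²(Ω)}`. -/
def normE (ε L : ℝ) (u v : ℝ → ℝ → ℝ) : ℝ :=
  Real.sqrt (intO L fun x y => ε * gradSq u x y) + Real.sqrt (intO L fun x y => ε * gradSq v x y)

/-- Positivity norm `‖u,v‖_P = ‖√(u_s) ∇v‖_{L²(Ω)}`. -/
def normP (L : ℝ) (us v : ℝ → ℝ → ℝ) : ℝ :=
  Real.sqrt (intO L fun x y => us x y * gradSq v x y)

/-- The `X` norm `‖u,v‖_X = ‖u,v‖_E + ε^{γ/2}(‖√ε u‖_∞ + ‖√ε v‖_∞)`. -/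
def normX (ε γ L : ℝ) (u v : ℝ → ℝ → ℝ) : ℝ :=
  normE ε L u v + ε ^ (γ/2) *
    (supO L (fun x y => Real.sqrt ε * u x y) + supO L (fun x y => Real.sqrt ε * v x y))

/-- Linearized convection term `S_u`. -/
def Su (us vs u v : ℝ → ℝ → ℝ) (x y : ℝ) : ℝ :=
  us x y * pdx u x y + pdx us x y * u x y + pdy us x y * v x y + vs x y * pdy u x y

/-- Linearized convection term `S_v`. -/
def Sv (us vs u v : ℝ → ℝ → ℝ) (x y : ℝ) : ℝ :=
  us x y * pdx v x y + pdx vs x y * u x y + vs x y * pdy v x y + pdy vs x y * v x y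

/-- The `W^{100,∞}` norm of a function on `(0,2)`. -/
def W100 (h : ℝ → ℝ) : ℝ :=
  sSup { r : ℝ | ∃ j ≤ 100, ∃ y ∈ Ioo (0:ℝ) 2, r = |deriv^[j] h y| }

section helpers
variable {f : ℝ → ℝ → ℝ}

lemma hasDerivAt_pdx (hf : ContDiff ℝ 1 (uncurry f)) (x y : ℝ) :
    HasDerivAt (fun s => f s y) (pdx f x y) x := by
  have h : DifferentiableAt ℝ (fun s => f s y) x := by
    have : (fun s => f s y) = (uncurry f) ∘ (fun s => (s, y)) := rfl
    rw [this]
    exact (hf.differentiable one_ne_zero (x, y)).comp x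
      (differentiableAt_id.prodMk (differentiableAt_const _))
  exact h.hasDerivAt

lemma hasDerivAt_pdy (hf : ContDiff ℝ 1 (uncurry f)) (x y : ℝ) :
    HasDerivAt (fun t => f x t) (pdy f x y) y := by
  have h : DifferentiableAt ℝ (fun t => f x t) y := by
    have : (fun t => f x t) = (uncurry f) ∘ (fun t => (x, t)) := rfl
    rw [this]
    exact (hf.differentiable one_ne_zero (x, y)).comp y
      ((differentiableAt_const _).prodMk differentiableAt_id)
  exact h.hasDerivAt

lemma pdx_eq_fderiv {n : WithTop ℕ∞} (hf : ContDiff ℝ n (uncurry f)) (hn : 1 ≤ n) (x y : ℝ) :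
    pdx f x y = fderiv ℝ (uncurry f) (x, y) (1, 0) := by
  have h1 : HasFDerivAt (uncurry f) (fderiv ℝ (uncurry f) (x, y)) (x, y) :=
    (hf.differentiable (zero_lt_one.trans_le hn).ne' (x, y)).hasFDerivAt
  have h2 : HasDerivAt (fun s : ℝ => ((s, y) : ℝ × ℝ)) (1, 0) x :=
    (hasDerivAt_id x).prodMk (hasDerivAt_const x y)
  exact (h1.comp_hasDerivAt x h2).deriv

lemma pdy_eq_fderiv {n : WithTop ℕ∞} (hf : ContDiff ℝ n (uncurry f)) (hn : 1 ≤ n) (x y : ℝ) :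
    pdy f x y = fderiv ℝ (uncurry f) (x, y) (0, 1) := by
  have h1 : HasFDerivAt (uncurry f) (fderiv ℝ (uncurry f) (x, y)) (x, y) :=
    (hf.differentiable (zero_lt_one.trans_le hn).ne' (x, y)).hasFDerivAt
  have h2 : HasDerivAt (fun t : ℝ => ((x, t) : ℝ × ℝ)) (0, 1) y :=
    (hasDerivAt_const y x).prodMk (hasDerivAt_id y)
  exact (h1.comp_hasDerivAt y h2).deriv

lemma contDiff_pdx {m n : WithTop ℕ∞} (hf : ContDiff ℝ n (uncurry f)) (hmn : m + 1 ≤ n) :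
    ContDiff ℝ m (uncurry (pdx f)) := by
  have h : uncurry (pdx f) = fun p : ℝ × ℝ => fderiv ℝ (uncurry f) p (1, 0) := by
    funext p
    exact pdx_eq_fderiv hf (le_trans (by simp) hmn) p.1 p.2
  rw [h]
  exact (hf.fderiv_right hmn).clm_apply contDiff_const

lemma contDiff_pdy {m n : WithTop ℕ∞} (hf : ContDiff ℝ n (uncurry f)) (hmn : m + 1 ≤ n) :
    ContDiff ℝ m (uncurry (pdy f)) := by
  have h : uncurry (pdy f) = fun p : ℝ × ℝ => fderiv ℝ (uncurry f) p (0, 1) := by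
    funext p
    exact pdy_eq_fderiv hf (le_trans (by simp) hmn) p.1 p.2
  rw [h]
  exact (hf.fderiv_right hmn).clm_apply contDiff_const

end helpers

section helpers2
variable {f : ℝ → ℝ → ℝ}

lemma hasDerivAt_fderiv_slice_x (hf : ContDiff ℝ 2 (uncurry f)) (w : ℝ × ℝ) (x y : ℝ) :
    HasDerivAt (fun s => fderiv ℝ (uncurry f) (s, y) w)
      (fderiv ℝ (fderiv ℝ (uncurry f)) (x, y) (1, 0) w) x := by
  have hd : HasFDerivAt (fderiv ℝ (uncurry f)) (fderiv ℝ (fderiv ℝ (uncurry f)) (x, y)) (x, y) :=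
    (((hf.fderiv_right (m := 1) (by norm_num)).differentiable one_ne_zero) (x, y)).hasFDerivAt
  have hγ : HasDerivAt (fun s : ℝ => ((s, y) : ℝ × ℝ)) (1, 0) x :=
    (hasDerivAt_id x).prodMk (hasDerivAt_const x y)
  have h1 : HasDerivAt (fun s => fderiv ℝ (uncurry f) (s, y))
      (fderiv ℝ (fderiv ℝ (uncurry f)) (x, y) (1, 0)) x := hd.comp_hasDerivAt x hγ
  exact (ContinuousLinearMap.apply ℝ ℝ w).hasFDerivAt.comp_hasDerivAt x h1

lemma hasDerivAt_fderiv_slice_y (hf : ContDiff ℝ 2 (uncurry f)) (w : ℝ × ℝ) (x y : ℝ) :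
    HasDerivAt (fun t => fderiv ℝ (uncurry f) (x, t) w)
      (fderiv ℝ (fderiv ℝ (uncurry f)) (x, y) (0, 1) w) y := by
  have hd : HasFDerivAt (fderiv ℝ (uncurry f)) (fderiv ℝ (fderiv ℝ (uncurry f)) (x, y)) (x, y) :=
    (((hf.fderiv_right (m := 1) (by norm_num)).differentiable one_ne_zero) (x, y)).hasFDerivAt
  have hγ : HasDerivAt (fun t : ℝ => ((x, t) : ℝ × ℝ)) (0, 1) y :=
    (hasDerivAt_const y x).prodMk (hasDerivAt_id y)
  have h1 : HasDerivAt (fun t => fderiv ℝ (uncurry f) (x, t))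
      (fderiv ℝ (fderiv ℝ (uncurry f)) (x, y) (0, 1)) y := hd.comp_hasDerivAt y hγ
  exact (ContinuousLinearMap.apply ℝ ℝ w).hasFDerivAt.comp_hasDerivAt y h1

lemma pdx_pdy_comm (hf : ContDiff ℝ 2 (uncurry f)) (x y : ℝ) :
    pdx (pdy f) x y = pdy (pdx f) x y := by
  have hsymm := (hf.contDiffAt (x := ((x, y) : ℝ × ℝ))).isSymmSndFDerivAt (by simp)
  have h1 : pdx (pdy f) x y = fderiv ℝ (fderiv ℝ (uncurry f)) (x, y) (1, 0) (0, 1) := by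
    have he : (fun s => pdy f s y) = fun s => fderiv ℝ (uncurry f) (s, y) (0, 1) :=
      funext fun s => pdy_eq_fderiv hf (by norm_num) s y
    rw [pdx, he]
    exact (hasDerivAt_fderiv_slice_x hf (0, 1) x y).deriv
  have h2 : pdy (pdx f) x y = fderiv ℝ (fderiv ℝ (uncurry f)) (x, y) (0, 1) (1, 0) := by
    have he : (fun t => pdx f x t) = fun t => fderiv ℝ (uncurry f) (x, t) (1, 0) :=
      funext fun t => pdx_eq_fderiv hf (by norm_num) x t
    rw [pdy, he]
    exact (hasDerivAt_fderiv_slice_y hf (1, 0) x y).deriv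
  rw [h1, h2, hsymm.eq]

end helpers2

section intHelpers
variable {F G g' : ℝ → ℝ → ℝ} {L : ℝ}

lemma integrableOn_Omg (hF : Continuous fun p : ℝ × ℝ => F p.1 p.2) (L : ℝ) :
    IntegrableOn (fun p : ℝ × ℝ => F p.1 p.2) (Omg L) := by
  have h := hF.continuousOn.integrableOn_compact (μ := volume)
    (isCompact_Icc.prod isCompact_Icc : IsCompact (Icc (0:ℝ) L ×ˢ Icc (0:ℝ) 2))
  exact h.mono_set (prod_mono Ioo_subset_Icc_self Ioo_subset_Icc_self)

lemma intO_eq_xy (hF : Continuous fun p : ℝ × ℝ => F p.1 p.2) :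
    intO L F = ∫ x in Ioo (0:ℝ) L, ∫ y in Ioo (0:ℝ) 2, F x y := by
  have hint : IntegrableOn (fun p : ℝ × ℝ => F p.1 p.2) (Ioo 0 L ×ˢ Ioo 0 2)
      (volume.prod volume) := by
    rw [← Measure.volume_eq_prod ℝ ℝ]; exact integrableOn_Omg hF L
  rw [intO, Omg, Measure.volume_eq_prod ℝ ℝ]
  exact setIntegral_prod _ hint

lemma intO_eq_yx (hF : Continuous fun p : ℝ × ℝ => F p.1 p.2) :
    intO L F = ∫ y in Ioo (0:ℝ) 2, ∫ x in Ioo (0:ℝ) L, F x y := by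
  have hint : Integrable (fun p : ℝ × ℝ => F p.1 p.2)
      ((volume.restrict (Ioo (0:ℝ) L)).prod (volume.restrict (Ioo (0:ℝ) 2))) := by
    rw [Measure.prod_restrict, ← Measure.volume_eq_prod ℝ ℝ]; exact integrableOn_Omg hF L
  have h1 := MeasureTheory.integral_prod_symm _ hint
  rw [intO, Omg, Measure.volume_eq_prod ℝ ℝ, ← Measure.prod_restrict]
  exact h1

lemma intO_congr (h : ∀ p ∈ Omg L, F p.1 p.2 = G p.1 p.2) : intO L F = intO L G :=
  setIntegral_congr_fun (measurableSet_Ioo.prod measurableSet_Ioo) h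

lemma intO_add (hF : Continuous fun p : ℝ × ℝ => F p.1 p.2)
    (hG : Continuous fun p : ℝ × ℝ => G p.1 p.2) :
    intO L (fun x y => F x y + G x y) = intO L F + intO L G :=
  integral_add (integrableOn_Omg hF L) (integrableOn_Omg hG L)

lemma intO_neg : intO L (fun x y => -(F x y)) = -intO L F := integral_neg _

lemma integral_Ioo_deriv {g h : ℝ → ℝ} {a b : ℝ} (hab : a ≤ b)
    (hg : ∀ t, HasDerivAt g (h t) t) (hh : Continuous h) :
    ∫ t in Ioo a b, h t = g b - g a := by
  rw [← integral_Ioc_eq_integral_Ioo, ← intervalIntegral.integral_of_le hab]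
  exact intervalIntegral.integral_eq_sub_of_hasDerivAt (fun t _ => hg t)
    (hh.intervalIntegrable a b)

lemma intO_derivx_eq (hL : 0 ≤ L) (hg' : Continuous fun p : ℝ × ℝ => g' p.1 p.2)
    (hdiff : ∀ x y, HasDerivAt (fun s => G s y) (g' x y) x) :
    intO L g' = ∫ y in Ioo (0:ℝ) 2, (G L y - G 0 y) := by
  rw [intO_eq_yx hg']
  apply setIntegral_congr_fun measurableSet_Ioo
  intro y _
  exact integral_Ioo_deriv hL (fun t => hdiff t y)
    (hg'.comp (continuous_id.prodMk continuous_const))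

lemma intO_derivy_eq (hL : 0 ≤ L) (hg' : Continuous fun p : ℝ × ℝ => g' p.1 p.2)
    (hdiff : ∀ x y, HasDerivAt (fun t => G x t) (g' x y) y) :
    intO L g' = ∫ x in Ioo (0:ℝ) L, (G x 2 - G x 0) := by
  rw [intO_eq_xy hg']
  apply setIntegral_congr_fun measurableSet_Ioo
  intro x _
  exact integral_Ioo_deriv (by norm_num) (fun t => hdiff x t)
    (hg'.comp (continuous_const.prodMk continuous_id))

lemma deriv_zero_of_Ioo {g : ℝ → ℝ} {a b t : ℝ} (h : ∀ s ∈ Ioo a b, g s = 0)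
    (ht : t ∈ Ioo a b) : deriv g t = 0 := by
  have he : g =ᶠ[nhds t] (fun _ => (0 : ℝ)) := by
    filter_upwards [isOpen_Ioo.mem_nhds ht] with s hs using h s hs
  rw [he.deriv_eq, deriv_const]

end intHelpers

lemma intO_cmul {F : ℝ → ℝ → ℝ} {L c : ℝ} :
    intO L (fun x y => c * F x y) = c * intO L F := integral_const_mul c _

lemma cont_integrableOn_Ioo {g : ℝ → ℝ} (hg : Continuous g) {a b : ℝ} :
    IntegrableOn g (Ioo a b) :=
  (hg.continuousOn.integrableOn_Icc).mono_set Ioo_subset_Icc_self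

/-- the identity for the viscous and pressure contributions under the
positivity multiplier `M = (−∂_y v, ∂_x v)`. -/
theorem stmt19 (L ε : ℝ) (hL0 : 0 < L) (hL1 : L ≤ 1) (hε0 : 0 < ε) (hε1 : ε < 1)
    (u v P : ℝ → ℝ → ℝ)
    (hu : ContDiff ℝ 3 (uncurry u)) (hv : ContDiff ℝ 3 (uncurry v))
    (hP : ContDiff ℝ 1 (uncurry P))
    (hdiv : ∀ p ∈ Omg L, pdx u p.1 p.2 + pdy v p.1 p.2 = 0)
    (hbcx0 : ∀ y ∈ Icc (0:ℝ) 2, u 0 y = 0 ∧ v 0 y = 0)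
    (hbcy : ∀ x ∈ Icc (0:ℝ) L, u x 0 = 0 ∧ v x 0 = 0 ∧ u x 2 = 0 ∧ v x 2 = 0)
    (hbcL : ∀ y ∈ Icc (0:ℝ) 2, pdy u L y + pdx v L y = 0 ∧ P L y = 2 * ε * pdx u L y) :
    intO L (fun x y => -(ε * plap u x y) * (-(pdy v x y)))
      + intO L (fun x y => -(ε * plap v x y) * pdx v x y)
      + intO L (fun x y => pdx P x y * (-(pdy v x y)) + pdy P x y * pdx v x y)
    = (ε / 2) * (∫ y in Ioo (0:ℝ) 2, (pdx v 0 y)^2)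
      + 2 * ε * ∫ y in Ioo (0:ℝ) 2, (pdx u L y)^2 := by
  -- smoothness facts
  have hu2 : ContDiff ℝ 2 (uncurry u) := hu.of_le (by norm_num)
  have hv2 : ContDiff ℝ 2 (uncurry v) := hv.of_le (by norm_num)
  have hux2 : ContDiff ℝ 2 (uncurry (pdx u)) := contDiff_pdx hu (by norm_num)
  have huy2 : ContDiff ℝ 2 (uncurry (pdy u)) := contDiff_pdy hu (by norm_num)
  have hvx2 : ContDiff ℝ 2 (uncurry (pdx v)) := contDiff_pdx hv (by norm_num)
  have hvy2 : ContDiff ℝ 2 (uncurry (pdy v)) := contDiff_pdy hv (by norm_num)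
  have hux1 : ContDiff ℝ 1 (uncurry (pdx u)) := hux2.of_le (by norm_num)
  have huy1 : ContDiff ℝ 1 (uncurry (pdy u)) := huy2.of_le (by norm_num)
  have hvx1 : ContDiff ℝ 1 (uncurry (pdx v)) := hvx2.of_le (by norm_num)
  have hvy1 : ContDiff ℝ 1 (uncurry (pdy v)) := hvy2.of_le (by norm_num)
  -- continuity facts
  have cP : Continuous fun p : ℝ × ℝ => P p.1 p.2 := hP.continuous
  have cPx : Continuous fun p : ℝ × ℝ => pdx P p.1 p.2 :=
    (contDiff_pdx (m := 0) hP (by norm_num)).continuous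
  have cPy : Continuous fun p : ℝ × ℝ => pdy P p.1 p.2 :=
    (contDiff_pdy (m := 0) hP (by norm_num)).continuous
  have cux : Continuous fun p : ℝ × ℝ => pdx u p.1 p.2 := hux2.continuous
  have cuy : Continuous fun p : ℝ × ℝ => pdy u p.1 p.2 := huy2.continuous
  have cvx : Continuous fun p : ℝ × ℝ => pdx v p.1 p.2 := hvx2.continuous
  have cvy : Continuous fun p : ℝ × ℝ => pdy v p.1 p.2 := hvy2.continuous
  have cuxx : Continuous fun p : ℝ × ℝ => pdx (pdx u) p.1 p.2 :=
    (contDiff_pdx (m := 0) hux2 (by norm_num)).continuous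
  have cuyy : Continuous fun p : ℝ × ℝ => pdy (pdy u) p.1 p.2 :=
    (contDiff_pdy (m := 0) huy2 (by norm_num)).continuous
  have cvxx : Continuous fun p : ℝ × ℝ => pdx (pdx v) p.1 p.2 :=
    (contDiff_pdx (m := 0) hvx2 (by norm_num)).continuous
  have cvyy : Continuous fun p : ℝ × ℝ => pdy (pdy v) p.1 p.2 :=
    (contDiff_pdy (m := 0) hvy2 (by norm_num)).continuous
  have cuxy : Continuous fun p : ℝ × ℝ => pdy (pdx u) p.1 p.2 :=
    (contDiff_pdy (m := 0) hux2 (by norm_num)).continuous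
  have cvxy : Continuous fun p : ℝ × ℝ => pdy (pdx v) p.1 p.2 :=
    (contDiff_pdy (m := 0) hvx2 (by norm_num)).continuous
  have cuyx : Continuous fun p : ℝ × ℝ => pdx (pdy u) p.1 p.2 :=
    (contDiff_pdx (m := 0) huy2 (by norm_num)).continuous
  have cvyx : Continuous fun p : ℝ × ℝ => pdx (pdy v) p.1 p.2 :=
    (contDiff_pdx (m := 0) hvy2 (by norm_num)).continuous
  -- divergence-free on the closed rectangle
  have hcl : Icc (0:ℝ) L ×ˢ Icc (0:ℝ) 2 = closure (Omg L) := by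
    rw [Omg, closure_prod_eq, closure_Ioo hL0.ne, closure_Ioo (by norm_num : (0:ℝ) ≠ 2)]
  have hdivc : ∀ x y, x ∈ Icc (0:ℝ) L → y ∈ Icc (0:ℝ) 2 → pdx u x y + pdy v x y = 0 := by
    have heq : EqOn (fun p : ℝ × ℝ => pdx u p.1 p.2 + pdy v p.1 p.2) (fun _ => (0:ℝ))
        (closure (Omg L)) :=
      Set.EqOn.closure (fun p hp => hdiv p hp) (cux.add cvy) continuous_const
    intro x y hx hy
    exact heq (hcl ▸ (Set.mk_mem_prod hx hy))
  -- boundary facts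
  have e1 : ∀ y ∈ Ioo (0:ℝ) 2, pdy v 0 y = 0 := fun y hy =>
    deriv_zero_of_Ioo (fun s hs => (hbcx0 s (Ioo_subset_Icc_self hs)).2) hy
  have e3 : ∀ y ∈ Ioo (0:ℝ) 2, pdy u 0 y = 0 := fun y hy =>
    deriv_zero_of_Ioo (fun s hs => (hbcx0 s (Ioo_subset_Icc_self hs)).1) hy
  have e2 : ∀ y ∈ Ioo (0:ℝ) 2, pdx u 0 y = 0 := by
    intro y hy
    have h := hdivc 0 y (left_mem_Icc.mpr hL0.le) (Ioo_subset_Icc_self hy)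
    have h1 := e1 y hy
    linarith
  have e6 : ∀ y ∈ Ioo (0:ℝ) 2, pdy v L y = -(pdx u L y) := by
    intro y hy
    have h := hdivc L y (right_mem_Icc.mpr hL0.le) (Ioo_subset_Icc_self hy)
    linarith
  have e7 : ∀ y ∈ Ioo (0:ℝ) 2, pdy u L y = -(pdx v L y) := by
    intro y hy
    have h := (hbcL y (Ioo_subset_Icc_self hy)).1
    linarith
  have e8 : ∀ y ∈ Ioo (0:ℝ) 2, P L y = 2 * ε * pdx u L y := fun y hy =>
    (hbcL y (Ioo_subset_Icc_self hy)).2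
  have e4a : ∀ x ∈ Ioo (0:ℝ) L, pdx u x 0 = 0 := fun x hx =>
    deriv_zero_of_Ioo (fun s hs => (hbcy s (Ioo_subset_Icc_self hs)).1) hx
  have e4b : ∀ x ∈ Ioo (0:ℝ) L, pdx u x 2 = 0 := fun x hx =>
    deriv_zero_of_Ioo (fun s hs => (hbcy s (Ioo_subset_Icc_self hs)).2.2.1) hx
  have e5a : ∀ x ∈ Ioo (0:ℝ) L, pdx v x 0 = 0 := fun x hx =>
    deriv_zero_of_Ioo (fun s hs => (hbcy s (Ioo_subset_Icc_self hs)).2.1) hx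
  have e5b : ∀ x ∈ Ioo (0:ℝ) L, pdx v x 2 = 0 := fun x hx =>
    deriv_zero_of_Ioo (fun s hs => (hbcy s (Ioo_subset_Icc_self hs)).2.2.2) hx
  -- the basic FTC computations
  have hD1 : intO L (fun x y => pdx (pdx u) x y * pdx u x y)
      = (∫ y in Ioo (0:ℝ) 2, (pdx u L y)^2) * (1/2) := by
    have hder : ∀ x y, HasDerivAt (fun s => pdx u s y * pdx u s y / 2)
        (pdx (pdx u) x y * pdx u x y) x := by
      intro x y
      have h := ((hasDerivAt_pdx hux1 x y).mul (hasDerivAt_pdx hux1 x y)).div_const 2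
      exact h.congr_deriv (by ring)
    rw [intO_derivx_eq hL0.le (cuxx.mul cux) hder]
    have hbd : ∀ y ∈ Ioo (0:ℝ) 2,
        pdx u L y * pdx u L y / 2 - pdx u 0 y * pdx u 0 y / 2 = (pdx u L y)^2 * (1/2) := by
      intro y hy; rw [e2 y hy]; ring
    rw [setIntegral_congr_fun measurableSet_Ioo hbd, integral_mul_const]
  have hD2 : intO L (fun x y => pdy (pdy u) x y * pdx u x y + pdy u x y * pdy (pdx u) x y)
      = 0 := by
    have hder : ∀ x y, HasDerivAt (fun t => pdy u x t * pdx u x t)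
        (pdy (pdy u) x y * pdx u x y + pdy u x y * pdy (pdx u) x y) y := fun x y =>
      (hasDerivAt_pdy huy1 x y).mul (hasDerivAt_pdy hux1 x y)
    rw [intO_derivy_eq hL0.le ((cuyy.mul cux).add (cuy.mul cuxy)) hder]
    have hbd : ∀ x ∈ Ioo (0:ℝ) L,
        pdy u x 2 * pdx u x 2 - pdy u x 0 * pdx u x 0 = (fun _ : ℝ => (0:ℝ)) x := by
      intro x hx; rw [e4a x hx, e4b x hx]; ring
    rw [setIntegral_congr_fun measurableSet_Ioo hbd]
    simp
  have hD3 : intO L (fun x y => pdy u x y * pdy (pdx u) x y)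
      = (∫ y in Ioo (0:ℝ) 2, (pdx v L y)^2) * (1/2) := by
    have hcl3 : (fun x y => pdy u x y * pdy (pdx u) x y)
        = fun x y => pdy u x y * pdx (pdy u) x y := by
      funext x y; rw [pdx_pdy_comm hu2]
    rw [hcl3]
    have hder : ∀ x y, HasDerivAt (fun s => pdy u s y * pdy u s y / 2)
        (pdy u x y * pdx (pdy u) x y) x := by
      intro x y
      have h := ((hasDerivAt_pdx huy1 x y).mul (hasDerivAt_pdx huy1 x y)).div_const 2
      exact h.congr_deriv (by ring)
    rw [intO_derivx_eq hL0.le (cuy.mul cuyx) hder]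
    have hbd : ∀ y ∈ Ioo (0:ℝ) 2,
        pdy u L y * pdy u L y / 2 - pdy u 0 y * pdy u 0 y / 2 = (pdx v L y)^2 * (1/2) := by
      intro y hy; rw [e3 y hy, e7 y hy]; ring
    rw [setIntegral_congr_fun measurableSet_Ioo hbd, integral_mul_const]
  have hD4 : intO L (fun x y => pdx (pdx v) x y * pdx v x y)
      = (∫ y in Ioo (0:ℝ) 2, (pdx v L y)^2) * (1/2)
        - (∫ y in Ioo (0:ℝ) 2, (pdx v 0 y)^2) * (1/2) := by
    have hder : ∀ x y, HasDerivAt (fun s => pdx v s y * pdx v s y / 2)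
        (pdx (pdx v) x y * pdx v x y) x := by
      intro x y
      have h := ((hasDerivAt_pdx hvx1 x y).mul (hasDerivAt_pdx hvx1 x y)).div_const 2
      exact h.congr_deriv (by ring)
    rw [intO_derivx_eq hL0.le (cvxx.mul cvx) hder]
    have hbd : ∀ y ∈ Ioo (0:ℝ) 2,
        pdx v L y * pdx v L y / 2 - pdx v 0 y * pdx v 0 y / 2
          = (pdx v L y)^2 * (1/2) - (pdx v 0 y)^2 * (1/2) := by
      intro y hy; ring
    have c1 : Continuous fun y : ℝ => (pdx v L y)^2 * (1/2) :=
      (((cvx.comp (continuous_const.prodMk continuous_id)).pow 2).mul continuous_const)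
    have c2 : Continuous fun y : ℝ => (pdx v 0 y)^2 * (1/2) :=
      (((cvx.comp (continuous_const.prodMk continuous_id)).pow 2).mul continuous_const)
    rw [setIntegral_congr_fun measurableSet_Ioo hbd,
      integral_sub (cont_integrableOn_Ioo c1) (cont_integrableOn_Ioo c2),
      integral_mul_const, integral_mul_const]
  have hD5 : intO L (fun x y => pdy (pdy v) x y * pdx v x y + pdy v x y * pdy (pdx v) x y)
      = 0 := by
    have hder : ∀ x y, HasDerivAt (fun t => pdy v x t * pdx v x t)
        (pdy (pdy v) x y * pdx v x y + pdy v x y * pdy (pdx v) x y) y := fun x y =>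
      (hasDerivAt_pdy hvy1 x y).mul (hasDerivAt_pdy hvx1 x y)
    rw [intO_derivy_eq hL0.le ((cvyy.mul cvx).add (cvy.mul cvxy)) hder]
    have hbd : ∀ x ∈ Ioo (0:ℝ) L,
        pdy v x 2 * pdx v x 2 - pdy v x 0 * pdx v x 0 = (fun _ : ℝ => (0:ℝ)) x := by
      intro x hx; rw [e5a x hx, e5b x hx]; ring
    rw [setIntegral_congr_fun measurableSet_Ioo hbd]
    simp
  have hD6 : intO L (fun x y => pdy v x y * pdy (pdx v) x y)
      = (∫ y in Ioo (0:ℝ) 2, (pdx u L y)^2) * (1/2) := by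
    have hcl6 : (fun x y => pdy v x y * pdy (pdx v) x y)
        = fun x y => pdy v x y * pdx (pdy v) x y := by
      funext x y; rw [pdx_pdy_comm hv2]
    rw [hcl6]
    have hder : ∀ x y, HasDerivAt (fun s => pdy v s y * pdy v s y / 2)
        (pdy v x y * pdx (pdy v) x y) x := by
      intro x y
      have h := ((hasDerivAt_pdx hvy1 x y).mul (hasDerivAt_pdx hvy1 x y)).div_const 2
      exact h.congr_deriv (by ring)
    rw [intO_derivx_eq hL0.le (cvy.mul cvyx) hder]
    have hbd : ∀ y ∈ Ioo (0:ℝ) 2,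
        pdy v L y * pdy v L y / 2 - pdy v 0 y * pdy v 0 y / 2 = (pdx u L y)^2 * (1/2) := by
      intro y hy; rw [e1 y hy, e6 y hy]; ring
    rw [setIntegral_congr_fun measurableSet_Ioo hbd, integral_mul_const]
  have hD7 : intO L (fun x y => pdy P x y * pdx v x y + P x y * pdy (pdx v) x y) = 0 := by
    have hder : ∀ x y, HasDerivAt (fun t => P x t * pdx v x t)
        (pdy P x y * pdx v x y + P x y * pdy (pdx v) x y) y := fun x y =>
      (hasDerivAt_pdy hP x y).mul (hasDerivAt_pdy hvx1 x y)
    rw [intO_derivy_eq hL0.le ((cPy.mul cvx).add (cP.mul cvxy)) hder]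
    have hbd : ∀ x ∈ Ioo (0:ℝ) L,
        P x 2 * pdx v x 2 - P x 0 * pdx v x 0 = (fun _ : ℝ => (0:ℝ)) x := by
      intro x hx; rw [e5a x hx, e5b x hx]; ring
    rw [setIntegral_congr_fun measurableSet_Ioo hbd]
    simp
  have hD8 : intO L (fun x y => pdx P x y * pdy v x y + P x y * pdx (pdy v) x y)
      = (∫ y in Ioo (0:ℝ) 2, (pdx u L y)^2) * (-(2*ε)) := by
    have hder : ∀ x y, HasDerivAt (fun s => P s y * pdy v s y)
        (pdx P x y * pdy v x y + P x y * pdx (pdy v) x y) x := fun x y =>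
      (hasDerivAt_pdx hP x y).mul (hasDerivAt_pdx hvy1 x y)
    rw [intO_derivx_eq hL0.le ((cPx.mul cvy).add (cP.mul cvyx)) hder]
    have hbd : ∀ y ∈ Ioo (0:ℝ) 2,
        P L y * pdy v L y - P 0 y * pdy v 0 y = (pdx u L y)^2 * (-(2*ε)) := by
      intro y hy; rw [e1 y hy, e6 y hy, e8 y hy]; ring
    rw [setIntegral_congr_fun measurableSet_Ioo hbd, integral_mul_const]
  -- atomic integrals
  have hA1 : intO L (fun x y => pdx (pdx u) x y * pdy v x y)
      = -((∫ y in Ioo (0:ℝ) 2, (pdx u L y)^2) * (1/2)) := by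
    have hc : intO L (fun x y => pdx (pdx u) x y * pdy v x y)
        = intO L (fun x y => -(pdx (pdx u) x y * pdx u x y)) := by
      apply intO_congr
      intro p hp
      have h := hdiv p hp
      have h2 : pdy v p.1 p.2 = -(pdx u p.1 p.2) := by linarith
      rw [h2]; ring
    rw [hc, intO_neg, hD1]
  have hF2 : intO L (fun x y => pdy (pdy u) x y * pdx u x y)
      = -((∫ y in Ioo (0:ℝ) 2, (pdx v L y)^2) * (1/2)) := by
    have h := intO_add (L := L) (F := fun x y => pdy (pdy u) x y * pdx u x y)
      (G := fun x y => pdy u x y * pdy (pdx u) x y) (cuyy.mul cux) (cuy.mul cuxy)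
    rw [hD2, hD3] at h
    linarith
  have hA2 : intO L (fun x y => pdy (pdy u) x y * pdy v x y)
      = (∫ y in Ioo (0:ℝ) 2, (pdx v L y)^2) * (1/2) := by
    have hc : intO L (fun x y => pdy (pdy u) x y * pdy v x y)
        = intO L (fun x y => -(pdy (pdy u) x y * pdx u x y)) := by
      apply intO_congr
      intro p hp
      have h := hdiv p hp
      have h2 : pdy v p.1 p.2 = -(pdx u p.1 p.2) := by linarith
      rw [h2]; ring
    rw [hc, intO_neg, hF2]; ring
  have hB2 : intO L (fun x y => pdy (pdy v) x y * pdx v x y)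
      = -((∫ y in Ioo (0:ℝ) 2, (pdx u L y)^2) * (1/2)) := by
    have h := intO_add (L := L) (F := fun x y => pdy (pdy v) x y * pdx v x y)
      (G := fun x y => pdy v x y * pdy (pdx v) x y) (cvyy.mul cvx) (cvy.mul cvxy)
    rw [hD5, hD6] at h
    linarith
  have hC1 : intO L (fun x y => pdy P x y * pdx v x y)
      = -(intO L (fun x y => P x y * pdy (pdx v) x y)) := by
    have h := intO_add (L := L) (F := fun x y => pdy P x y * pdx v x y)
      (G := fun x y => P x y * pdy (pdx v) x y) (cPy.mul cvx) (cP.mul cvxy)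
    rw [hD7] at h
    linarith
  have hC2 : intO L (fun x y => pdx P x y * pdy v x y)
      = (∫ y in Ioo (0:ℝ) 2, (pdx u L y)^2) * (-(2*ε))
        - intO L (fun x y => P x y * pdy (pdx v) x y) := by
    have hQ : (fun x y => P x y * pdx (pdy v) x y)
        = fun x y => P x y * pdy (pdx v) x y := by
      funext x y; rw [pdx_pdy_comm hv2]
    have h := intO_add (L := L) (F := fun x y => pdx P x y * pdy v x y)
      (G := fun x y => P x y * pdx (pdy v) x y) (cPx.mul cvy) (cP.mul cvyx)
    rw [hD8, hQ] at h
    linarith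
  -- assembling the three terms
  have hT1 : intO L (fun x y => -(ε * plap u x y) * (-(pdy v x y)))
      = ε * (-((∫ y in Ioo (0:ℝ) 2, (pdx u L y)^2) * (1/2))
          + (∫ y in Ioo (0:ℝ) 2, (pdx v L y)^2) * (1/2)) := by
    have hfe : (fun x y => -(ε * plap u x y) * (-(pdy v x y)))
        = fun x y => ε * (pdx (pdx u) x y * pdy v x y + pdy (pdy u) x y * pdy v x y) := by
      funext x y; simp only [plap]; ring
    rw [hfe, intO_cmul, intO_add (cuxx.mul cvy) (cuyy.mul cvy), hA1, hA2]
  have hT2 : intO L (fun x y => -(ε * plap v x y) * pdx v x y)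
      = ε * (-((∫ y in Ioo (0:ℝ) 2, (pdx v L y)^2) * (1/2)
            - (∫ y in Ioo (0:ℝ) 2, (pdx v 0 y)^2) * (1/2))
          + (∫ y in Ioo (0:ℝ) 2, (pdx u L y)^2) * (1/2)) := by
    have hfe : (fun x y => -(ε * plap v x y) * pdx v x y)
        = fun x y => ε * (-(pdx (pdx v) x y * pdx v x y) + -(pdy (pdy v) x y * pdx v x y)) := by
      funext x y; simp only [plap]; ring
    rw [hfe, intO_cmul, intO_add ((cvxx.mul cvx).neg) ((cvyy.mul cvx).neg),
      intO_neg, intO_neg, hD4, hB2]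
    ring
  have hT3 : intO L (fun x y => pdx P x y * (-(pdy v x y)) + pdy P x y * pdx v x y)
      = (∫ y in Ioo (0:ℝ) 2, (pdx u L y)^2) * (2*ε) := by
    have hfe : (fun x y => pdx P x y * (-(pdy v x y)) + pdy P x y * pdx v x y)
        = fun x y => pdy P x y * pdx v x y + -(pdx P x y * pdy v x y) := by
      funext x y; ring
    rw [hfe, intO_add (cPy.mul cvx) ((cPx.mul cvy).neg), intO_neg, hC1, hC2]
    ring
  rw [hT1, hT2, hT3]
  ring
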